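/- Genus 2 commutation relation: with the same definitions, [L_2, L_6] = (2/5)(2λ₈ L_0 − 2λ₄ L_4). -/

import Mathlib

set_option maxHeartbeats 2000000



open MvPolynomial

/-- Variables: `X 0 = λ₄`, `X 1 = λ₆`, `X 2 = λ₈`, `X 3 = λ₁₀`. -/
noncomputable abbrev l4 : MvPolynomial (Fin 4) ℚ := X 0
noncomputable abbrev l6 : MvPolynomial (Fin 4) ℚ := X 1
noncomputable abbrev l8 : MvPolynomial (Fin 4) ℚ := X 2
noncomputable abbrev l10 : MvPolynomial (Fin 4) ℚ := X 3

/-- The genus-2 matrix `T = (T_{2k+2,2s−2})`, rows and columns indexed by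
`0,1,2,3 ↔ λ₄,λ₆,λ₈,λ₁₀`. -/
noncomputable def T2 : Matrix (Fin 4) (Fin 4) (MvPolynomial (Fin 4) ℚ) :=
  ![![4 * l4, 6 * l6, 8 * l8, 10 * l10],
    ![6 * l6, 8 * l8 - C (12/5 : ℚ) * l4 ^ 2, 10 * l10 - C (8/5 : ℚ) * l4 * l6,
      - (C (4/5 : ℚ) * l4 * l8)],
    ![8 * l8, 10 * l10 - C (8/5 : ℚ) * l4 * l6, 4 * l4 * l8 - C (12/5 : ℚ) * l6 ^ 2,
      6 * l4 * l10 - C (6/5 : ℚ) * l6 * l8],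
    ![10 * l10, - (C (4/5 : ℚ) * l4 * l8), 6 * l4 * l10 - C (6/5 : ℚ) * l6 * l8,
      4 * l6 * l10 - C (8/5 : ℚ) * l8 ^ 2]]

/-- The derivation `L_{2k} = Σ_s T_{2k+2,2s−2} ∂/∂λ_{2s}` of `ℚ[λ₄,λ₆,λ₈,λ₁₀]`;
`Lg2 k` is `L_{2k}`. -/
noncomputable def Lg2 (k : Fin 4) (p : MvPolynomial (Fin 4) ℚ) : MvPolynomial (Fin 4) ℚ :=
  ∑ j : Fin 4, T2 k j * pderiv j p

lemma pderiv_nat (i : Fin 4) (n : ℕ) [n.AtLeastTwo] :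
    pderiv i (no_index (OfNat.ofNat n) : MvPolynomial (Fin 4) ℚ) = 0 := by
  rw [← map_ofNat (C : ℚ →+* MvPolynomial (Fin 4) ℚ) n]; exact pderiv_C

lemma pderiv_comm' (i j : Fin 4) (p : MvPolynomial (Fin 4) ℚ) :
    pderiv i (pderiv j p) = pderiv j (pderiv i p) := by
  induction p using MvPolynomial.induction_on with
  | C a => simp
  | add p q hp hq => simp [hp, hq]
  | mul_X p n hp =>
      simp only [Derivation.leibniz, smul_eq_mul, map_add, map_mul, pderiv_X, hp]
      by_cases h1 : j = n <;> by_cases h2 : i = n <;>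
        simp [Pi.single_apply, h1, h2] <;> ring

section
variable (q : ℚ) (x : MvPolynomial (Fin 4) ℚ) (n : ℕ) [n.AtLeastTwo]
lemma Cmul : C q * x = q • x := C_mul' ..
lemma mulC : x * C q = q • x := by rw [mul_comm]; exact C_mul' ..
lemma natmul : (no_index (OfNat.ofNat n) : MvPolynomial (Fin 4) ℚ) * x = (OfNat.ofNat n : ℚ) • x := by
  rw [← map_ofNat (C : ℚ →+* MvPolynomial (Fin 4) ℚ) n]; exact C_mul' ..
lemma mulnat : x * (no_index (OfNat.ofNat n) : MvPolynomial (Fin 4) ℚ) = (OfNat.ofNat n : ℚ) • x := by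
  rw [mul_comm, natmul]
end

/-- `[L₂, L₆] = (2/5)(2λ₈ L₀ − 2λ₄ L₄)`. -/
theorem genus2_bracket_L2_L6 (p : MvPolynomial (Fin 4) ℚ) :
    Lg2 1 (Lg2 3 p) - Lg2 3 (Lg2 1 p)
      = C (2/5 : ℚ) * (2 * l8 * Lg2 0 p - 2 * l4 * Lg2 2 p) := by
  simp only [Lg2, T2, Fin.sum_univ_four]
  norm_num [Matrix.cons_val_zero, Matrix.cons_val_one, Matrix.head_cons,
    Matrix.cons_val_two, Matrix.tail_cons, Matrix.cons_val_three,
    Matrix.cons_val', Matrix.empty_val', Matrix.cons_val_fin_one, Matrix.head_fin_const]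
  simp only [map_add, map_sub, map_neg, pderiv_mul, pderiv_pow, pderiv_X, pderiv_C, pderiv_nat,
    Pi.single_apply]
  norm_num [Fin.ext_iff]
  norm_num
  rw [pderiv_comm' 1 0, pderiv_comm' 2 0, pderiv_comm' 3 0, pderiv_comm' 2 1,
    pderiv_comm' 3 1, pderiv_comm' 3 2]
  ring_nf
  simp only [← map_pow, Cmul, mulC, natmul, mulnat, smul_mul_assoc, mul_smul_comm, smul_smul]
  module
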